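/- Let G ≤ Aut(X*), with X = {0,1}, be a self-similar group containing two nontrivial elements a and b such that a has trivial root permutation and sections a_0 = 1, a_1 = u, while b has trivial root permutation and sections b_0 = v, b_1 = 1. Then G is not isomorphic to a free group (of any rank). -/

import Mathlib

/-- `f` is an automorphism of the binary rooted tree `X* = List Bool`: a permutation of
the set of finite binary words preserving word length and the prefix relation. -/
def IsTreeAut (f : Equiv.Perm (List Bool)) : Prop :=
  (∀ v : List Bool, (f v).length = v.length) ∧
    ∀ v w : List Bool, v <+: w → f v <+: f w

/-- A subgroup of the permutations of `X* = List Bool` is self-similar if for every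
element `g`, every letter `x` admits a letter `y` and an element `h` of the group with
`g(xw) = y h(w)` for every word `w` (i.e. all sections of elements belong to the
group). -/
def IsSelfSimilar (G : Subgroup (Equiv.Perm (List Bool))) : Prop :=
  ∀ g ∈ G, ∀ x : Bool, ∃ y : Bool, ∃ h ∈ G, ∀ w : List Bool, g (x :: w) = y :: h w

universe u

/-- Let `G ≤ Aut(X*)` be a self-similar group of binary rooted tree
automorphisms containing two nontrivial elements `a` and `b` such that `a` has trivial
root permutation and sections `a₀ = 1`, `a₁ = u`, while `b` has trivial root permutation
and sections `b₀ = v`, `b₁ = 1`.  Then `G` is not isomorphic to a free group of any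
rank. -/
theorem self_similar_not_free (G : Subgroup (Equiv.Perm (List Bool)))
    (hG : ∀ g ∈ G, IsTreeAut g) (hss : IsSelfSimilar G)
    (a b : Equiv.Perm (List Bool)) (haG : a ∈ G) (hbG : b ∈ G)
    (ha : a ≠ 1) (hb : b ≠ 1)
    (haNil : a [] = [])
    (ha0 : ∀ w : List Bool, a (false :: w) = false :: w)
    (ha1 : ∀ w : List Bool, ∃ w' : List Bool, a (true :: w) = true :: w')
    (hbNil : b [] = [])
    (hb1 : ∀ w : List Bool, b (true :: w) = true :: w)
    (hb0 : ∀ w : List Bool, ∃ w' : List Bool, b (false :: w) = false :: w') :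
    ∀ ι : Type u, ¬ Nonempty (G ≃* FreeGroup ι) := by
  intro ι ⟨e⟩
  classical
  -- `a` and `b` commute since they act on disjoint subtrees
  have hab : a * b = b * a := by
    apply Equiv.ext
    intro v
    match v with
    | [] => simp [Equiv.Perm.mul_apply, haNil, hbNil]
    | false :: w =>
        obtain ⟨w', hw'⟩ := hb0 w
        simp [Equiv.Perm.mul_apply, hw', ha0]
    | true :: w =>
        obtain ⟨w', hw'⟩ := ha1 w
        simp [Equiv.Perm.mul_apply, hw', hb1]
  set A : ↥G := ⟨a, haG⟩ with hA
  set B : ↥G := ⟨b, hbG⟩ with hB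
  have hAB : A * B = B * A := Subtype.ext hab
  set x : FreeGroup ι := e A with hx
  set y : FreeGroup ι := e B with hy
  have hxyc : Commute x y := by
    unfold Commute SemiconjBy
    rw [hx, hy, ← map_mul, ← map_mul, hAB]
  set K : Subgroup (FreeGroup ι) := Subgroup.closure {x, y} with hK
  have hxK : x ∈ K := Subgroup.subset_closure (by simp)
  have hyK : y ∈ K := Subgroup.subset_closure (by simp)
  -- K is commutative
  have hcomm : ∀ z w : FreeGroup ι, z ∈ K → w ∈ K → Commute z w := by
    intro z w hz hw
    refine Subgroup.closure_induction₂ (p := fun z w _ _ => Commute z w)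
      ?_ (fun _ _ => Commute.one_left _) (fun _ _ => Commute.one_right _)
      (fun _ _ _ _ _ _ h1 h2 => h1.mul_left h2)
      (fun _ _ _ _ _ _ h1 h2 => h1.mul_right h2)
      (fun _ _ _ _ h => h.inv_left) (fun _ _ _ _ h => h.inv_right) hz hw
    intro u v hu hv
    simp only [Set.mem_insert_iff, Set.mem_singleton_iff] at hu hv
    rcases hu with rfl | rfl <;> rcases hv with rfl | rfl
    · exact Commute.refl _
    · exact hxyc
    · exact hxyc.symm
    · exact Commute.refl _
  haveI : IsFreeGroup ↥K := inferInstance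
  set S := IsFreeGroup.Generators ↥K with hS
  set φ : ↥K ≃* FreeGroup S := IsFreeGroup.toFreeGroup ↥K with hφ
  have hofc : ∀ s t : S, Commute (FreeGroup.of s) (FreeGroup.of t) := by
    intro s t
    have h1 : φ.symm (.of s) * φ.symm (.of t) = φ.symm (.of t) * φ.symm (.of s) :=
      Subtype.ext (hcomm _ _ (φ.symm (.of s)).2 (φ.symm (.of t)).2)
    have h2 := congrArg φ h1
    show FreeGroup.of s * FreeGroup.of t = FreeGroup.of t * FreeGroup.of s
    simpa [map_mul] using h2
  have hSsub : Subsingleton S := by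
    by_contra h
    rw [not_subsingleton_iff_nontrivial] at h
    obtain ⟨s, t, hst⟩ := exists_pair_ne S
    set f : S → Equiv.Perm (Fin 3) :=
      fun r => if r = s then Equiv.swap 0 1 else Equiv.swap 1 2 with hf
    have h2 := congrArg (FreeGroup.lift f) (hofc s t)
    simp only [map_mul, FreeGroup.lift_apply_of, hf, if_pos rfl, if_neg (Ne.symm hst)] at h2
    exact absurd h2 (by decide)
  have hane : A ≠ 1 := fun h => ha (congrArg Subtype.val h)
  have hbne : B ≠ 1 := fun h => hb (congrArg Subtype.val h)
  rcases isEmpty_or_nonempty S with hSe | hSn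
  · -- K is trivial, so x = 1 and a = 1, contradiction
    haveI : Unique (FreeGroup S) := inferInstance
    have : (⟨x, hxK⟩ : ↥K) = 1 := φ.injective (Subsingleton.elim _ _)
    have hx1 : x = 1 := congrArg Subtype.val this
    exact hane (e.injective (by rw [← hx, hx1, map_one]))
  · haveI : Unique S := uniqueOfSubsingleton (Classical.arbitrary S)
    set χ : ↥K ≃* FreeGroup Unit :=
      φ.trans (FreeGroup.freeGroupCongr (Equiv.ofUnique S Unit)) with hχ
    set c : ↥K := χ.symm (FreeGroup.of ()) with hc
    have key : ∀ z : ↥K, z = c ^ (FreeGroup.freeGroupUnitEquivInt (χ z)) := by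
      intro z
      have h1 : FreeGroup.freeGroupUnitEquivInt.symm (FreeGroup.freeGroupUnitEquivInt (χ z))
          = χ z := FreeGroup.freeGroupUnitEquivInt.left_inv (χ z)
      have h2 : FreeGroup.of () ^ (FreeGroup.freeGroupUnitEquivInt (χ z)) = χ z := h1
      calc z = χ.symm (χ z) := (χ.symm_apply_apply z).symm
        _ = χ.symm (FreeGroup.of () ^ (FreeGroup.freeGroupUnitEquivInt (χ z))) := by rw [h2]
        _ = c ^ (FreeGroup.freeGroupUnitEquivInt (χ z)) := by rw [map_zpow, hc]
    set X : ↥K := ⟨x, hxK⟩ with hX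
    set Y : ↥K := ⟨y, hyK⟩ with hY
    set p : ℤ := FreeGroup.freeGroupUnitEquivInt (χ X) with hp
    set q : ℤ := FreeGroup.freeGroupUnitEquivInt (χ Y) with hq
    have hXc : X = c ^ p := key X
    have hYc : Y = c ^ q := key Y
    have hp0 : p ≠ 0 := by
      intro h
      rw [h, zpow_zero] at hXc
      have : x = 1 := congrArg Subtype.val hXc
      exact hane (e.injective (by rw [← hx, this, map_one]))
    have hq0 : q ≠ 0 := by
      intro h
      rw [h, zpow_zero] at hYc
      have : y = 1 := congrArg Subtype.val hYc
      exact hbne (e.injective (by rw [← hy, this, map_one]))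
    -- X^q = Y^p
    have hXY : X ^ q = Y ^ p := by
      rw [hXc, hYc, ← zpow_mul, ← zpow_mul, mul_comm]
    have hxyF : x ^ q = y ^ p := by
      have := congrArg Subtype.val hXY
      simpa [SubgroupClass.coe_zpow] using this
    have hABzp : A ^ q = B ^ p := e.injective (by rw [map_zpow, map_zpow, ← hx, ← hy, hxyF])
    have habzp : a ^ q = b ^ p := by
      have := congrArg Subtype.val hABzp
      simpa [SubgroupClass.coe_zpow] using this
    -- a^q fixes everything
    have haq1 : a ^ q = 1 := by
      apply Equiv.ext
      intro v
      rw [Equiv.Perm.one_apply]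
      match v with
      | [] => exact Equiv.Perm.zpow_apply_eq_self_of_apply_eq_self haNil q
      | false :: w => exact Equiv.Perm.zpow_apply_eq_self_of_apply_eq_self (ha0 w) q
      | true :: w =>
          rw [habzp]
          exact Equiv.Perm.zpow_apply_eq_self_of_apply_eq_self (hb1 w) p
    have hXq1 : X ^ q = 1 := by
      apply Subtype.ext
      have hA1 : A ^ q = 1 := Subtype.ext (by simpa [SubgroupClass.coe_zpow] using haq1)
      have : x ^ q = 1 := by rw [hx, ← map_zpow, hA1, map_one]
      exact (SubgroupClass.coe_zpow X q).trans this
    have hcpq : c ^ (p * q) = 1 := by rw [zpow_mul, ← hXc, hXq1]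
    have := congrArg χ hcpq
    rw [map_zpow, map_one, hc, χ.apply_symm_apply] at this
    have hpq : p * q = 0 := by
      have h0 : FreeGroup.of () ^ (p * q) = FreeGroup.of () ^ (0 : ℤ) := by
        rw [this, zpow_zero]
      exact FreeGroup.freeGroupUnitEquivInt.symm.injective h0
    exact absurd hpq (mul_ne_zero hp0 hq0)
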